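/- For the complete bipartite graph K_{3,3}, there is an embedding of the 8-clique into K_{3,3} with weak edge depth 4; hence emb(K_{3,3}) ≥ 2. -/

import Mathlib

open Finset

structure FHypergraph (V : Type*) [DecidableEq V] [Fintype V] where
  edges : Finset (Finset V)

namespace FHypergraph

variable {V : Type*} [DecidableEq V] [Fintype V]

/-- Two vertex sets touch in `H`: they intersect, or some hyperedge meets both. -/
def touch (H : FHypergraph V) (S T : Finset V) : Prop :=
  (S ∩ T).Nonempty ∨ ∃ e ∈ H.edges, (e ∩ S).Nonempty ∧ (e ∩ T).Nonempty

/-- `S` induces a connected subhypergraph of `H`. -/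
def connSet (H : FHypergraph V) (S : Finset V) : Prop :=
  ∀ a ∈ S, ∀ b ∈ S,
    Relation.ReflTransGen (fun x y => x ∈ S ∧ y ∈ S ∧ ∃ e ∈ H.edges, x ∈ e ∧ y ∈ e) a b

/-- An embedding of the `k`-clique into the hypergraph `H`. -/
def IsCliqueEmb (H : FHypergraph V) (k : ℕ) (ψ : Fin k → Finset V) : Prop :=
  (∀ i, (ψ i).Nonempty) ∧ (∀ i, H.connSet (ψ i)) ∧
    ∀ i j : Fin k, i ≠ j → H.touch (ψ i) (ψ j)

/-- The weak edge depth of an embedding: the max over hyperedges `e` of the number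
of clique vertices whose image meets `e`. -/
def wedOf (H : FHypergraph V) {k : ℕ} (ψ : Fin k → Finset V) : ℕ :=
  H.edges.sup fun e => (Finset.univ.filter fun i : Fin k => ((ψ i) ∩ e).Nonempty).card

/-- `wed (C_k ↦ H)`: the minimum weak edge depth over embeddings of the `k`-clique. -/
noncomputable def wed (H : FHypergraph V) (k : ℕ) : ℕ :=
  sInf {w | ∃ ψ : Fin k → Finset V, H.IsCliqueEmb k ψ ∧ H.wedOf ψ ≤ w}

end FHypergraph

/-- A tree decomposition of a hypergraph. -/
structure IsTreeDecomp {V : Type*} [DecidableEq V] [Fintype V] {ι : Type*}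
    (H : FHypergraph V) (T : SimpleGraph ι) (χ : ι → Finset V) : Prop where
  tree : T.IsTree
  covers : ∀ e ∈ H.edges, ∃ t, e ⊆ χ t
  conn : ∀ v : V, (T.induce {t | v ∈ χ t}).Connected

/-- The clique embedding power of a hypergraph. -/
noncomputable def embPower {V : Type*} [DecidableEq V] [Fintype V] (H : FHypergraph V) : ℝ :=
  sSup {x : ℝ | ∃ k : ℕ, 3 ≤ k ∧ x = (k : ℝ) / (H.wed k : ℝ)}

/-- The complete bipartite graph `K_{3,3}` as a hypergraph: vertices
`Fin 3 ⊕ Fin 3`, hyperedges the edges `{x_i, y_j}`. -/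
def K33 : FHypergraph (Fin 3 ⊕ Fin 3) :=
  ⟨Finset.univ.image fun p : Fin 3 × Fin 3 =>
    ({Sum.inl p.1, Sum.inr p.2} : Finset (Fin 3 ⊕ Fin 3))⟩

instance {V : Type*} [DecidableEq V] [Fintype V] (H : FHypergraph V) (S T : Finset V) :
    Decidable (H.touch S T) := by
  unfold FHypergraph.touch; infer_instance

lemma K33_pair_mem (a b : Fin 3) :
    ({Sum.inl a, Sum.inr b} : Finset (Fin 3 ⊕ Fin 3)) ∈ K33.edges :=
  Finset.mem_image.mpr ⟨(a, b), Finset.mem_univ _, rfl⟩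

lemma K33_conn_pair (a b : Fin 3) :
    K33.connSet ({Sum.inl a, Sum.inr b} : Finset (Fin 3 ⊕ Fin 3)) := by
  intro x hx y hy
  exact Relation.ReflTransGen.single ⟨hx, hy, _, K33_pair_mem a b, hx, hy⟩

lemma K33_conn_single (v : Fin 3 ⊕ Fin 3) :
    K33.connSet ({v} : Finset (Fin 3 ⊕ Fin 3)) := by
  intro x hx y hy
  rw [Finset.mem_singleton] at hx hy
  subst hx; subst hy
  exact Relation.ReflTransGen.refl


/-- Double counting: any embedding of the `k`-clique into `K_{3,3}` satisfies
`k ≤ 9 * wedOf ψ`. -/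
lemma K33_key {k : ℕ} (ψ : Fin k → Finset (Fin 3 ⊕ Fin 3))
    (h : K33.IsCliqueEmb k ψ) : k ≤ 9 * K33.wedOf ψ := by
  have hedge : ∀ i : Fin k, ∃ e ∈ K33.edges, ((ψ i) ∩ e).Nonempty := by
    intro i
    obtain ⟨v, hv⟩ := h.1 i
    match v with
    | Sum.inl a =>
        exact ⟨{Sum.inl a, Sum.inr 0}, K33_pair_mem a 0,
          ⟨Sum.inl a, Finset.mem_inter.mpr ⟨hv, by simp⟩⟩⟩
    | Sum.inr b =>
        exact ⟨{Sum.inl 0, Sum.inr b}, K33_pair_mem 0 b,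
          ⟨Sum.inr b, Finset.mem_inter.mpr ⟨hv, by simp⟩⟩⟩
  choose f hf hfi using hedge
  have hcard : (Finset.univ : Finset (Fin k)).card =
      ∑ e ∈ K33.edges, ((Finset.univ : Finset (Fin k)).filter fun i => f i = e).card :=
    Finset.card_eq_sum_card_fiberwise fun i _ => hf i
  have hle : ∀ e ∈ K33.edges,
      ((Finset.univ : Finset (Fin k)).filter fun i => f i = e).card ≤ K33.wedOf ψ := by
    intro e he
    refine le_trans (Finset.card_le_card ?_) (Finset.le_sup (f := fun e =>
      (Finset.univ.filter fun i : Fin k => ((ψ i) ∩ e).Nonempty).card) he)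
    intro i hi
    rw [Finset.mem_filter] at hi ⊢
    exact ⟨hi.1, hi.2 ▸ hfi i⟩
  have hsum : (Finset.univ : Finset (Fin k)).card ≤ K33.edges.card * K33.wedOf ψ := by
    rw [hcard]
    calc ∑ e ∈ K33.edges, ((Finset.univ : Finset (Fin k)).filter fun i => f i = e).card
        ≤ ∑ _e ∈ K33.edges, K33.wedOf ψ := Finset.sum_le_sum hle
      _ = K33.edges.card * K33.wedOf ψ := by rw [Finset.sum_const, smul_eq_mul]
  have h9 : K33.edges.card ≤ 9 := le_trans Finset.card_image_le (by simp)
  calc k = (Finset.univ : Finset (Fin k)).card := by simp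
    _ ≤ K33.edges.card * K33.wedOf ψ := hsum
    _ ≤ 9 * K33.wedOf ψ := Nat.mul_le_mul_right _ h9

/-- There is an embedding of the `8`-clique into `K_{3,3}` with weak edge depth
`4`; hence `emb(K_{3,3}) ≥ 2`. -/
theorem K33_emb_lower_bound :
    (∃ ψ : Fin 8 → Finset (Fin 3 ⊕ Fin 3),
      K33.IsCliqueEmb 8 ψ ∧ K33.wedOf ψ ≤ 4) ∧
    (2 : ℝ) ≤ embPower K33 := by
  set ψ : Fin 8 → Finset (Fin 3 ⊕ Fin 3) :=
    ![{Sum.inl 0, Sum.inr 0}, {Sum.inl 1, Sum.inr 0},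
      {Sum.inl 0, Sum.inr 1}, {Sum.inl 1, Sum.inr 1},
      {Sum.inl 0, Sum.inr 2}, {Sum.inl 1, Sum.inr 2},
      {Sum.inl 2}, {Sum.inl 2}] with hψ
  have hemb : K33.IsCliqueEmb 8 ψ := by
    refine ⟨by decide, ?_, by decide⟩
    intro i
    fin_cases i <;> simp only [hψ] <;>
      first
        | exact K33_conn_pair _ _
        | exact K33_conn_single _
  have hwed : K33.wedOf ψ ≤ 4 := by decide
  refine ⟨⟨ψ, hemb, hwed⟩, ?_⟩
  -- wed bounds
  have hwedle : K33.wed 8 ≤ 4 := Nat.sInf_le ⟨ψ, hemb, hwed⟩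
  have hne : {w | ∃ φ : Fin 8 → Finset (Fin 3 ⊕ Fin 3),
      K33.IsCliqueEmb 8 φ ∧ K33.wedOf φ ≤ w}.Nonempty := ⟨4, ψ, hemb, hwed⟩
  have hwedpos : 1 ≤ K33.wed 8 := by
    unfold FHypergraph.wed
    obtain ⟨φ, hφ, hφle⟩ := Nat.sInf_mem hne
    have := K33_key φ hφ
    omega
  -- bddAbove
  have hbdd : BddAbove {x : ℝ | ∃ k : ℕ, 3 ≤ k ∧ x = (k : ℝ) / (K33.wed k : ℝ)} := by
    refine ⟨9, fun x hx => ?_⟩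
    obtain ⟨k, _, rfl⟩ := hx
    by_cases hz : K33.wed k = 0
    · simp [hz]
    · have hnek : {w | ∃ φ : Fin k → Finset (Fin 3 ⊕ Fin 3),
          K33.IsCliqueEmb k φ ∧ K33.wedOf φ ≤ w}.Nonempty := by
        by_contra hcon
        rw [Set.not_nonempty_iff_eq_empty] at hcon
        exact hz (by simp [FHypergraph.wed, hcon])
      obtain ⟨φ, hφ, hφle⟩ := Nat.sInf_mem hnek
      have hk : k ≤ 9 * K33.wed k := le_trans (K33_key φ hφ)
        (Nat.mul_le_mul_left _ hφle)
      rw [div_le_iff₀ (by positivity : (0:ℝ) < (K33.wed k : ℝ))]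
      calc (k : ℝ) ≤ ((9 * K33.wed k : ℕ) : ℝ) := by exact_mod_cast hk
        _ = 9 * (K33.wed k : ℝ) := by push_cast; ring
  have hmem : (8 : ℝ) / (K33.wed 8 : ℝ) ∈
      {x : ℝ | ∃ k : ℕ, 3 ≤ k ∧ x = (k : ℝ) / (K33.wed k : ℝ)} := ⟨8, by norm_num, by norm_num⟩
  refine le_trans ?_ (le_csSup hbdd hmem)
  have h4 : (K33.wed 8 : ℝ) ≤ 4 := by exact_mod_cast hwedle
  have hp : (0 : ℝ) < (K33.wed 8 : ℝ) := by exact_mod_cast hwedpos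
  rw [le_div_iff₀ hp]
  linarith
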